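/- Let Δ̃ₙ (n ≥ 4) be the simplicial complex on the 15n-element ground set consisting of the 3n image variables x_{ij} and the 12n camera variables a_{ijk} (1 ≤ i ≤ n, 1 ≤ j ≤ 3, 1 ≤ k ≤ 4), whose minimal nonfaces are the sets of the form (spread of a focal): for each minimal nonface N of Δₙ (profile a permutation of (3,3,0,…,0), (3,2,2,0,…,0), (2,2,2,2,0,…,0)), the set N ∪ {a_{ijk} : x_{ij} ∈ N, 1 ≤ k ≤ 4}. Then Δ̃ₙ is pure of dimension 13n + 2. -/

import Mathlib

open Finset

/-- The profile of a subset `U` of the ground set `{x_{ij}} = Fin n × Fin 3`: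
`profile U i` is the number of `j` with `x_{ij} ∈ U`. -/
def profileOf {n : ℕ} (U : Finset (Fin n × Fin 3)) (i : Fin n) : ℕ :=
  (U.filter (fun p => p.1 = i)).card

/-- A profile is *bad* if, up to permutation of the indices, it equals
`(3,3,0,…,0)`, `(3,2,2,0,…,0)` or `(2,2,2,2,0,…,0)`. -/
def IsBadProfile {n : ℕ} (c : Fin n → ℕ) : Prop :=
  (∃ i j, i ≠ j ∧ c i = 3 ∧ c j = 3 ∧ ∀ k, k ≠ i → k ≠ j → c k = 0) ∨
  (∃ i j k, i ≠ j ∧ i ≠ k ∧ j ≠ k ∧ c i = 3 ∧ c j = 2 ∧ c k = 2 ∧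
    ∀ l, l ≠ i → l ≠ j → l ≠ k → c l = 0) ∨
  (∃ i j k l, i ≠ j ∧ i ≠ k ∧ i ≠ l ∧ j ≠ k ∧ j ≠ l ∧ k ≠ l ∧
    c i = 2 ∧ c j = 2 ∧ c k = 2 ∧ c l = 2 ∧
    ∀ m, m ≠ i → m ≠ j → m ≠ k → m ≠ l → c m = 0)

/-- `U` is a face of the simplicial complex `Δₙ`: it contains no (minimal)
nonface, i.e. no subset whose profile is bad. -/
def IsFaceD (n : ℕ) (U : Finset (Fin n × Fin 3)) : Prop :=
  ¬ ∃ W : Finset (Fin n × Fin 3), W ⊆ U ∧ IsBadProfile (profileOf W)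

/-- `U` is a facet (maximal face) of `Δₙ`. -/
def IsFacetD (n : ℕ) (U : Finset (Fin n × Fin 3)) : Prop :=
  IsFaceD n U ∧ ∀ W : Finset (Fin n × Fin 3), IsFaceD n W → U ⊆ W → W = U

/-- A profile is a permutation of `(3,2,1,1,…,1)`. -/
def IsProfile321 {n : ℕ} (c : Fin n → ℕ) : Prop :=
  ∃ i j, i ≠ j ∧ c i = 3 ∧ c j = 2 ∧ ∀ k, k ≠ i → k ≠ j → c k = 1

/-- A profile is a permutation of `(2,2,2,1,…,1)`. -/
def IsProfile2221 {n : ℕ} (c : Fin n → ℕ) : Prop :=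
  ∃ i j k, i ≠ j ∧ i ≠ k ∧ j ≠ k ∧ c i = 2 ∧ c j = 2 ∧ c k = 2 ∧
    ∀ l, l ≠ i → l ≠ j → l ≠ k → c l = 1

/-- The ground set of `Δ̃ₙ`: the `3n` image variables `x_{ij}` together with the
`12n` camera variables `a_{ijk}`. -/
abbrev TGround (n : ℕ) := (Fin n × Fin 3) ⊕ (Fin n × Fin 3 × Fin 4)

/-- The minimal nonface of `Δ̃ₙ` attached to a set `N` of `x`-variables (the
spread of a focal): `N` together with all four camera variables `a_{ijk}` for
every `x_{ij} ∈ N`. -/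
def tildeNonface {n : ℕ} (N : Finset (Fin n × Fin 3)) : Finset (TGround n) :=
  N.image Sum.inl ∪
    (N ×ˢ (Finset.univ : Finset (Fin 4))).image
      (fun q => Sum.inr (q.1.1, q.1.2, q.2))

/-- `U` is a face of `Δ̃ₙ`: it contains no set `tildeNonface N` for `N` a set of
`x`-variables with bad profile. -/
def IsFaceT (n : ℕ) (U : Finset (TGround n)) : Prop :=
  ¬ ∃ N : Finset (Fin n × Fin 3),
      IsBadProfile (profileOf N) ∧ tildeNonface N ⊆ U

/-- `U` is a facet (maximal face) of `Δ̃ₙ`. -/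
def IsFacetT (n : ℕ) (U : Finset (TGround n)) : Prop :=
  IsFaceT n U ∧ ∀ W : Finset (TGround n), IsFaceT n W → U ⊆ W → W = U

def Violation {n : ℕ} (c : Fin n → ℕ) : Prop :=
  (∃ i j, i ≠ j ∧ 3 ≤ c i ∧ 3 ≤ c j) ∨
  (∃ i j k, i ≠ j ∧ i ≠ k ∧ j ≠ k ∧ 3 ≤ c i ∧ 2 ≤ c j ∧ 2 ≤ c k) ∨
  (∃ i j k l, i ≠ j ∧ i ≠ k ∧ i ≠ l ∧ j ≠ k ∧ j ≠ l ∧ k ≠ l ∧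
    2 ≤ c i ∧ 2 ≤ c j ∧ 2 ≤ c k ∧ 2 ≤ c l)

lemma violation_mono {n : ℕ} {c d : Fin n → ℕ} (h : Violation c)
    (hcd : ∀ m, 2 ≤ c m → c m ≤ d m) : Violation d := by
  rcases h with ⟨i, j, hij, hi, hj⟩ | ⟨i, j, k, h1, h2, h3, hi, hj, hk⟩ |
    ⟨i, j, k, l, h1, h2, h3, h4, h5, h6, hi, hj, hk, hl⟩
  · exact Or.inl ⟨i, j, hij, le_trans hi (hcd i (by omega)), le_trans hj (hcd j (by omega))⟩
  · exact Or.inr (Or.inl ⟨i, j, k, h1, h2, h3, le_trans hi (hcd i (by omega)),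
      le_trans hj (hcd j (by omega)), le_trans hk (hcd k (by omega))⟩)
  · exact Or.inr (Or.inr ⟨i, j, k, l, h1, h2, h3, h4, h5, h6,
      le_trans hi (hcd i (by omega)), le_trans hj (hcd j (by omega)),
      le_trans hk (hcd k (by omega)), le_trans hl (hcd l (by omega))⟩)

lemma profile_mono {n : ℕ} {W U : Finset (Fin n × Fin 3)} (h : W ⊆ U) (i : Fin n) :
    profileOf W i ≤ profileOf U i :=
  Finset.card_le_card (Finset.filter_subset_filter _ h)

lemma profile_le_three {n : ℕ} (U : Finset (Fin n × Fin 3)) (i : Fin n) :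
    profileOf U i ≤ 3 := by
  have h : (U.filter (fun p => p.1 = i)).card ≤ (Finset.univ : Finset (Fin 3)).card := by
    apply Finset.card_le_card_of_injOn (fun p => p.2) (fun _ _ => Finset.mem_univ _)
    intro p hp q hq hpq
    simp only [Finset.mem_coe, Finset.mem_filter] at hp hq
    exact Prod.ext (hp.2.trans hq.2.symm) hpq
  simpa [profileOf] using h

lemma profile_union {n : ℕ} {A B : Finset (Fin n × Fin 3)} (h : Disjoint A B) (k : Fin n) :
    profileOf (A ∪ B) k = profileOf A k + profileOf B k := by
  unfold profileOf
  rw [Finset.filter_union, Finset.card_union_of_disjoint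
    (Finset.disjoint_filter_filter h)]

lemma profile_fiber_self {n : ℕ} {T : Finset (Fin n × Fin 3)} {i : Fin n}
    (h : ∀ p ∈ T, p.1 = i) : profileOf T i = T.card := by
  unfold profileOf
  rw [Finset.filter_eq_self.mpr h]

lemma profile_fiber_ne {n : ℕ} {T : Finset (Fin n × Fin 3)} {i k : Fin n}
    (h : ∀ p ∈ T, p.1 = i) (hk : k ≠ i) : profileOf T k = 0 := by
  unfold profileOf
  rw [Finset.card_eq_zero, Finset.filter_eq_empty_iff]
  intro p hp hpk
  exact hk ((hpk ▸ (h p hp)).symm ▸ rfl)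

lemma exists_fiber_subset {n : ℕ} (U : Finset (Fin n × Fin 3)) (i : Fin n) (m : ℕ)
    (h : m ≤ profileOf U i) :
    ∃ T : Finset (Fin n × Fin 3), T ⊆ U ∧ (∀ p ∈ T, p.1 = i) ∧ T.card = m := by
  obtain ⟨T, hT, hc⟩ := Finset.exists_subset_card_eq h
  exact ⟨T, hT.trans (Finset.filter_subset _ _),
    fun p hp => (Finset.mem_filter.mp (hT hp)).2, hc⟩

lemma disjoint_fibers {n : ℕ} {A B : Finset (Fin n × Fin 3)} {i j : Fin n}
    (hA : ∀ p ∈ A, p.1 = i) (hB : ∀ p ∈ B, p.1 = j) (hij : i ≠ j) : Disjoint A B := by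
  rw [Finset.disjoint_left]
  intro p hpA hpB
  exact hij ((hA p hpA) ▸ (hB p hpB) ▸ rfl)

lemma bad_implies_violation {n : ℕ} {c : Fin n → ℕ} (h : IsBadProfile c) : Violation c := by
  rcases h with ⟨i, j, hij, hi, hj, _⟩ | ⟨i, j, k, h1, h2, h3, hi, hj, hk, _⟩ |
    ⟨i, j, k, l, h1, h2, h3, h4, h5, h6, hi, hj, hk, hl, _⟩
  · exact Or.inl ⟨i, j, hij, by omega, by omega⟩
  · exact Or.inr (Or.inl ⟨i, j, k, h1, h2, h3, by omega, by omega, by omega⟩)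
  · exact Or.inr (Or.inr ⟨i, j, k, l, h1, h2, h3, h4, h5, h6,
      by omega, by omega, by omega, by omega⟩)

lemma faceD_iff {n : ℕ} (U : Finset (Fin n × Fin 3)) :
    IsFaceD n U ↔ ¬ Violation (profileOf U) := by
  constructor
  · -- face → no violation; contrapositive: violation → ∃ bad subset
    intro hface hviol
    apply hface
    rcases hviol with ⟨i, j, hij, hi, hj⟩ | ⟨i, j, k, h1, h2, h3, hi, hj, hk⟩ |
      ⟨i, j, k, l, h1, h2, h3, h4, h5, h6, hi, hj, hk, hl⟩
    · obtain ⟨T1, hT1U, hT1f, hT1c⟩ := exists_fiber_subset U i 3 hi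
      obtain ⟨T2, hT2U, hT2f, hT2c⟩ := exists_fiber_subset U j 3 hj
      have d12 := disjoint_fibers hT1f hT2f hij
      refine ⟨T1 ∪ T2, Finset.union_subset hT1U hT2U, Or.inl ⟨i, j, hij, ?_, ?_, ?_⟩⟩
      · rw [profile_union d12, profile_fiber_self hT1f, profile_fiber_ne hT2f hij]; omega
      · rw [profile_union d12, profile_fiber_ne hT1f hij.symm, profile_fiber_self hT2f]; omega
      · intro m hmi hmj
        rw [profile_union d12, profile_fiber_ne hT1f hmi, profile_fiber_ne hT2f hmj]
    · obtain ⟨T1, hT1U, hT1f, hT1c⟩ := exists_fiber_subset U i 3 hi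
      obtain ⟨T2, hT2U, hT2f, hT2c⟩ := exists_fiber_subset U j 2 hj
      obtain ⟨T3, hT3U, hT3f, hT3c⟩ := exists_fiber_subset U k 2 hk
      have d12 := disjoint_fibers hT1f hT2f h1
      have d13 := disjoint_fibers hT1f hT3f h2
      have d23 := disjoint_fibers hT2f hT3f h3
      have d1 : Disjoint T1 (T2 ∪ T3) := Finset.disjoint_union_right.mpr ⟨d12, d13⟩
      refine ⟨T1 ∪ (T2 ∪ T3), Finset.union_subset hT1U (Finset.union_subset hT2U hT3U),
        Or.inr (Or.inl ⟨i, j, k, h1, h2, h3, ?_, ?_, ?_, ?_⟩)⟩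
      · rw [profile_union d1, profile_union d23, profile_fiber_self hT1f,
          profile_fiber_ne hT2f h1, profile_fiber_ne hT3f h2]; omega
      · rw [profile_union d1, profile_union d23, profile_fiber_ne hT1f h1.symm,
          profile_fiber_self hT2f, profile_fiber_ne hT3f h3]; omega
      · rw [profile_union d1, profile_union d23, profile_fiber_ne hT1f h2.symm,
          profile_fiber_ne hT2f h3.symm, profile_fiber_self hT3f]; omega
      · intro m hm1 hm2 hm3
        rw [profile_union d1, profile_union d23, profile_fiber_ne hT1f hm1,
          profile_fiber_ne hT2f hm2, profile_fiber_ne hT3f hm3]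
    · obtain ⟨T1, hT1U, hT1f, hT1c⟩ := exists_fiber_subset U i 2 hi
      obtain ⟨T2, hT2U, hT2f, hT2c⟩ := exists_fiber_subset U j 2 hj
      obtain ⟨T3, hT3U, hT3f, hT3c⟩ := exists_fiber_subset U k 2 hk
      obtain ⟨T4, hT4U, hT4f, hT4c⟩ := exists_fiber_subset U l 2 hl
      have d34 : Disjoint T3 T4 := disjoint_fibers hT3f hT4f h6
      have d2 : Disjoint T2 (T3 ∪ T4) := Finset.disjoint_union_right.mpr
        ⟨disjoint_fibers hT2f hT3f h4, disjoint_fibers hT2f hT4f h5⟩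
      have d1 : Disjoint T1 (T2 ∪ (T3 ∪ T4)) := Finset.disjoint_union_right.mpr
        ⟨disjoint_fibers hT1f hT2f h1, Finset.disjoint_union_right.mpr
          ⟨disjoint_fibers hT1f hT3f h2, disjoint_fibers hT1f hT4f h3⟩⟩
      refine ⟨T1 ∪ (T2 ∪ (T3 ∪ T4)),
        Finset.union_subset hT1U (Finset.union_subset hT2U (Finset.union_subset hT3U hT4U)),
        Or.inr (Or.inr ⟨i, j, k, l, h1, h2, h3, h4, h5, h6, ?_, ?_, ?_, ?_, ?_⟩)⟩
      · rw [profile_union d1, profile_union d2, profile_union d34, profile_fiber_self hT1f,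
          profile_fiber_ne hT2f h1, profile_fiber_ne hT3f h2,
          profile_fiber_ne hT4f h3]; omega
      · rw [profile_union d1, profile_union d2, profile_union d34, profile_fiber_ne hT1f h1.symm,
          profile_fiber_self hT2f, profile_fiber_ne hT3f h4,
          profile_fiber_ne hT4f h5]; omega
      · rw [profile_union d1, profile_union d2, profile_union d34, profile_fiber_ne hT1f h2.symm,
          profile_fiber_ne hT2f h4.symm, profile_fiber_self hT3f,
          profile_fiber_ne hT4f h6]; omega
      · rw [profile_union d1, profile_union d2, profile_union d34, profile_fiber_ne hT1f h3.symm,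
          profile_fiber_ne hT2f h5.symm, profile_fiber_ne hT3f h6.symm, profile_fiber_self hT4f]; omega
      · intro m hm1 hm2 hm3 hm4
        rw [profile_union d1, profile_union d2, profile_union d34, profile_fiber_ne hT1f hm1,
          profile_fiber_ne hT2f hm2, profile_fiber_ne hT3f hm3, profile_fiber_ne hT4f hm4]
  · intro hviol ⟨W, hWU, hWbad⟩
    exact hviol (violation_mono (bad_implies_violation hWbad)
      (fun m _ => profile_mono hWU m))

lemma profile_sum_eq {n : ℕ} (hn : 4 ≤ n) (c : Fin n → ℕ)
    (hle : ∀ i, c i ≤ 3)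
    (hface : ¬ Violation c)
    (hbump : ∀ i, c i < 3 → Violation (Function.update c i (c i + 1))) :
    ∑ i, c i = n + 3 := by
  -- no zeros
  have hpos : ∀ i, 1 ≤ c i := by
    intro i
    by_contra h
    have hci : c i = 0 := by omega
    have hV := hbump i (by omega)
    apply hface
    apply violation_mono hV
    intro m hm
    rcases eq_or_ne m i with rfl | hne
    · rw [Function.update_self] at hm; omega
    · rw [Function.update_of_ne hne]
  -- abbreviations for clauses of ¬Violation c
  have hc1 : ¬ ∃ i j : Fin n, i ≠ j ∧ 3 ≤ c i ∧ 3 ≤ c j := fun h => hface (Or.inl h)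
  have hc2 : ¬ ∃ i j k : Fin n, i ≠ j ∧ i ≠ k ∧ j ≠ k ∧ 3 ≤ c i ∧ 2 ≤ c j ∧ 2 ≤ c k :=
    fun h => hface (Or.inr (Or.inl h))
  have hc3 : ¬ ∃ i j k l : Fin n, i ≠ j ∧ i ≠ k ∧ i ≠ l ∧ j ≠ k ∧ j ≠ l ∧ k ≠ l ∧
      2 ≤ c i ∧ 2 ≤ c j ∧ 2 ≤ c k ∧ 2 ≤ c l := fun h => hface (Or.inr (Or.inr h))
  haveI : Nontrivial (Fin n) := Fin.nontrivial_iff_two_le.mpr (by omega)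
  by_cases h3 : ∃ i0, c i0 = 3
  · obtain ⟨i0, hi0⟩ := h3
    -- all others ≤ 2
    have hle2 : ∀ j, j ≠ i0 → c j ≤ 2 := by
      intro j hj
      by_contra h
      exact hc1 ⟨i0, j, (Ne.symm hj), by omega, by omega⟩
    -- at most one other = 2
    have honly : ∀ j k, j ≠ i0 → k ≠ i0 → j ≠ k → ¬(2 ≤ c j ∧ 2 ≤ c k) := by
      intro j k hj hk hjk ⟨h1, h2⟩
      exact hc2 ⟨i0, j, k, Ne.symm hj, Ne.symm hk, hjk, by omega, h1, h2⟩
    -- exists another = 2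
    have hex2 : ∃ j0, j0 ≠ i0 ∧ c j0 = 2 := by
      by_contra hno
      push_neg at hno
      have hall1 : ∀ j, j ≠ i0 → c j = 1 := by
        intro j hj
        have := hle2 j hj
        have := hpos j
        have := hno j hj
        omega
      obtain ⟨j0, hj0⟩ := exists_ne i0
      have hV := hbump j0 (by rw [hall1 j0 hj0]; omega)
      set c' := Function.update c j0 (c j0 + 1) with hc'
      have hval : ∀ m, c' m = if m = j0 then 2 else c m := by
        intro m
        rcases eq_or_ne m j0 with rfl | hne
        · simp [hc', Function.update_self, hall1 m hj0]
        · simp [hc', Function.update_of_ne hne, hne]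
      have h3only : ∀ m, 3 ≤ c' m → m = i0 := by
        intro m hm
        rw [hval] at hm
        by_contra hmne
        split at hm
        · omega
        · have := hall1 m hmne; omega
      have h2only : ∀ m, 2 ≤ c' m → m = i0 ∨ m = j0 := by
        intro m hm
        rw [hval] at hm
        split at hm
        · tauto
        · by_contra hmm
          push_neg at hmm
          have := hall1 m hmm.1; omega
      rcases hV with ⟨i, j, hij, hi, hj⟩ | ⟨i, j, k, h1, h2, _h3, hi, hj, hk⟩ |
        ⟨i, j, k, l, h1, h2, _ha, h4, _hb, _hc, hi, hj, hk, hl⟩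
      · exact hij ((h3only i hi).trans (h3only j hj).symm)
      · have := h3only i hi
        rcases h2only j hj with rfl | rfl
        · exact h1 (by rw [this])
        · rcases h2only k hk with rfl | rfl
          · exact h2 (by rw [this])
          · exact absurd rfl _h3
      · rcases h2only i hi with hi' | hi' <;> rcases h2only j hj with hj' | hj' <;>
          rcases h2only k hk with hk' | hk' <;>
          first
          | exact h1 (hi'.trans hj'.symm)
          | exact h2 (hi'.trans hk'.symm)
          | exact h4 (hj'.trans hk'.symm)
    obtain ⟨j0, hj0, hcj0⟩ := hex2
    have hall1 : ∀ k, k ≠ i0 → k ≠ j0 → c k = 1 := by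
      intro k hk1 hk2
      have h := hpos k
      by_contra hne
      have h2k : 2 ≤ c k := by omega
      exact honly j0 k hj0 hk1 (Ne.symm hk2) ⟨by omega, h2k⟩
    have hval : ∀ m, c m = (if m = i0 then 2 else 0) + (if m = j0 then 1 else 0) + 1 := by
      intro m
      rcases eq_or_ne m i0 with rfl | h1
      · simp [hi0, (by exact Ne.symm hj0 : m ≠ j0)]
      · rcases eq_or_ne m j0 with rfl | h2
        · simp [h1, hcj0]
        · simp [h1, h2, hall1 m h1 h2]
    calc ∑ i, c i = ∑ m, ((if m = i0 then 2 else 0) + (if m = j0 then 1 else 0) + 1) :=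
          Finset.sum_congr rfl (fun m _ => hval m)
      _ = n + 3 := by
          rw [Finset.sum_add_distrib, Finset.sum_add_distrib, Finset.sum_ite_eq'
            Finset.univ i0 (fun _ => 2), Finset.sum_ite_eq' Finset.univ j0 (fun _ => 1)]
          simp only [Finset.mem_univ, if_true, Finset.sum_const, smul_eq_mul,
            mul_one, Finset.card_univ, Fintype.card_fin]
          omega
  · push_neg at h3
    have hle2 : ∀ i, c i ≤ 2 := by intro i; have := h3 i; have := hle i; omega
    set D := Finset.univ.filter (fun i => 2 ≤ c i) with hD
    have hmemD : ∀ i, i ∈ D ↔ 2 ≤ c i := by intro i; simp [hD]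
    have hDle : D.card ≤ 3 := by
      by_contra h
      push_neg at h
      obtain ⟨i, hi⟩ := Finset.card_pos.mp (by omega : 0 < D.card)
      obtain ⟨j, hj⟩ := Finset.card_pos.mp (by rw [Finset.card_erase_of_mem hi]; omega :
        0 < (D.erase i).card)
      obtain ⟨k, hk⟩ := Finset.card_pos.mp (by
        rw [Finset.card_erase_of_mem hj, Finset.card_erase_of_mem hi]; omega :
        0 < ((D.erase i).erase j).card)
      obtain ⟨l, hl⟩ := Finset.card_pos.mp (by
        rw [Finset.card_erase_of_mem hk, Finset.card_erase_of_mem hj,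
          Finset.card_erase_of_mem hi]; omega :
        0 < (((D.erase i).erase j).erase k).card)
      have hjD := Finset.mem_of_mem_erase hj
      have hkD := Finset.mem_of_mem_erase (Finset.mem_of_mem_erase hk)
      have hlD := Finset.mem_of_mem_erase (Finset.mem_of_mem_erase
        (Finset.mem_of_mem_erase hl))
      refine hc3 ⟨i, j, k, l, ?_, ?_, ?_, ?_, ?_, ?_, ?_, ?_, ?_, ?_⟩
      · exact (Finset.ne_of_mem_erase hj).symm
      · exact (Finset.ne_of_mem_erase (Finset.mem_of_mem_erase hk)).symm
      · exact (Finset.ne_of_mem_erase (Finset.mem_of_mem_erase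
          (Finset.mem_of_mem_erase hl))).symm
      · exact (Finset.ne_of_mem_erase hk).symm
      · exact (Finset.ne_of_mem_erase (Finset.mem_of_mem_erase hl)).symm
      · exact (Finset.ne_of_mem_erase hl).symm
      · exact (hmemD i).mp hi
      · exact (hmemD j).mp hjD
      · exact (hmemD k).mp hkD
      · exact (hmemD l).mp hlD
    have hDge : 3 ≤ D.card := by
      by_contra h
      push_neg at h
      rcases Finset.eq_empty_or_nonempty D with hDe | ⟨i0, hi0⟩
      · -- all ones; bump any
        have hall1 : ∀ i, c i = 1 := by
          intro i
          have : i ∉ D := hDe ▸ Finset.notMem_empty i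
          rw [hmemD] at this
          have := hpos i
          omega
        have i0 : Fin n := ⟨0, by omega⟩
        have hV := hbump i0 (by rw [hall1]; omega)
        set c' := Function.update c i0 (c i0 + 1) with hc'
        have hval : ∀ m, c' m ≤ 2 := by
          intro m
          rcases eq_or_ne m i0 with rfl | hne
          · simp [hc', hall1]
          · simp [hc', Function.update_of_ne hne, hall1]
        have h2only : ∀ m, 2 ≤ c' m → m = i0 := by
          intro m hm
          by_contra hne
          rw [hc', Function.update_of_ne hne, hall1] at hm
          omega
        rcases hV with ⟨i, j, _, hi, _⟩ | ⟨i, j, k, _, _, _, hi, _, _⟩ |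
          ⟨i, j, k, l, h1, _, _, _, _, _, hi, hj, _, _⟩
        · have := hval i; omega
        · have := hval i; omega
        · exact h1 ((h2only i hi).trans (h2only j hj).symm)
      · -- |D| ≤ 2, D nonempty: bump i0 ∈ D to 3
        have hci0 : c i0 = 2 := by
          have := (hmemD i0).mp hi0
          have := hle2 i0
          omega
        have hV := hbump i0 (by omega)
        set c' := Function.update c i0 (c i0 + 1) with hc'
        have h3only : ∀ m, 3 ≤ c' m → m = i0 := by
          intro m hm
          by_contra hne
          rw [hc', Function.update_of_ne hne] at hm
          have := hle2 m
          omega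
        have h2D : ∀ m, 2 ≤ c' m → m ∈ D := by
          intro m hm
          rcases eq_or_ne m i0 with rfl | hne
          · exact hi0
          · rw [hc', Function.update_of_ne hne] at hm
            exact (hmemD m).mpr hm
        rcases hV with ⟨i, j, hij, hi, hj⟩ | ⟨i, j, k, h1, h2, hjk, hi, hj, hk⟩ |
          ⟨i, j, k, l, h1, h2, _, h4, _, _, hi, hj, hk, hl⟩
        · exact hij ((h3only i hi).trans (h3only j hj).symm)
        · -- {i,j,k} ⊆ D distinct, |D| ≤ 2
          have hiD : i ∈ D := h2D i (by omega)
          have hjD : j ∈ D := h2D j hj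
          have hkD : k ∈ D := h2D k hk
          have : ({i, j, k} : Finset (Fin n)) ⊆ D := by
            intro m hm
            simp only [Finset.mem_insert, Finset.mem_singleton] at hm
            rcases hm with rfl | rfl | rfl <;> assumption
          have hcard : ({i, j, k} : Finset (Fin n)).card = 3 := by
            rw [Finset.card_insert_of_notMem (by simp [h1, h2]),
              Finset.card_insert_of_notMem (by simp [hjk])]
            simp
          have := Finset.card_le_card this
          omega
        · have hiD : i ∈ D := h2D i hi
          have hjD : j ∈ D := h2D j hj
          have hkD : k ∈ D := h2D k hk
          have : ({i, j, k} : Finset (Fin n)) ⊆ D := by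
            intro m hm
            simp only [Finset.mem_insert, Finset.mem_singleton] at hm
            rcases hm with rfl | rfl | rfl <;> assumption
          have hcard : ({i, j, k} : Finset (Fin n)).card = 3 := by
            rw [Finset.card_insert_of_notMem (by simp [h1, h2]),
              Finset.card_insert_of_notMem (by simp [h4])]
            simp
          have := Finset.card_le_card this
          omega
    have hD3 : D.card = 3 := le_antisymm hDle hDge
    obtain ⟨a, b, c0, hab, hac, hbc, hDeq⟩ := Finset.card_eq_three.mp hD3
    have hval : ∀ m, c m = (if m = a then 1 else 0) + (if m = b then 1 else 0) +
        (if m = c0 then 1 else 0) + 1 := by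
      intro m
      have hmD : m ∈ D ↔ (m = a ∨ m = b ∨ m = c0) := by
        rw [hDeq]; simp
      rcases eq_or_ne m a with rfl | h1
      · have : 2 ≤ c m := (hmemD m).mp (hmD.mpr (Or.inl rfl))
        have := hle2 m
        simp [hab, hac]
        omega
      · rcases eq_or_ne m b with rfl | h2
        · have : 2 ≤ c m := (hmemD m).mp (hmD.mpr (Or.inr (Or.inl rfl)))
          have := hle2 m
          simp [h1, hbc]
          omega
        · rcases eq_or_ne m c0 with rfl | h3'
          · have : 2 ≤ c m := (hmemD m).mp (hmD.mpr (Or.inr (Or.inr rfl)))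
            have := hle2 m
            simp [h1, h2]
            omega
          · have : m ∉ D := by rw [hmD]; tauto
            rw [hmemD] at this
            have := hpos m
            simp [h1, h2, h3']
            omega
    calc ∑ i, c i = ∑ m, ((if m = a then 1 else 0) + (if m = b then 1 else 0) +
          (if m = c0 then 1 else 0) + 1) := Finset.sum_congr rfl (fun m _ => hval m)
      _ = n + 3 := by
          rw [Finset.sum_add_distrib, Finset.sum_add_distrib, Finset.sum_add_distrib,
            Finset.sum_ite_eq' Finset.univ a (fun _ => 1),
            Finset.sum_ite_eq' Finset.univ b (fun _ => 1),
            Finset.sum_ite_eq' Finset.univ c0 (fun _ => 1)]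
          simp only [Finset.mem_univ, if_true, Finset.sum_const, smul_eq_mul,
            mul_one, Finset.card_univ, Fintype.card_fin]
          omega

lemma card_eq_sum_profile {n : ℕ} (U : Finset (Fin n × Fin 3)) :
    U.card = ∑ i, profileOf U i :=
  Finset.card_eq_sum_card_fiberwise (fun x _ => Finset.mem_univ x.1)

lemma faceD_mono {n : ℕ} {V U : Finset (Fin n × Fin 3)} (h : V ⊆ U) (hU : IsFaceD n U) :
    IsFaceD n V := fun ⟨W, hW, hbad⟩ => hU ⟨W, hW.trans h, hbad⟩

lemma profile_insert {n : ℕ} (U : Finset (Fin n × Fin 3)) (x : Fin n × Fin 3)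
    (hx : x ∉ U) :
    profileOf (insert x U) = Function.update (profileOf U) x.1 (profileOf U x.1 + 1) := by
  funext k
  unfold profileOf
  rw [Finset.filter_insert]
  rcases eq_or_ne x.1 k with rfl | hne
  · rw [if_pos rfl, Function.update_self,
      Finset.card_insert_of_notMem (fun h => hx (Finset.mem_filter.mp h).1)]
  · rw [if_neg hne, Function.update_of_ne (Ne.symm hne)]

lemma facetD_card {n : ℕ} (hn : 4 ≤ n) (F : Finset (Fin n × Fin 3))
    (hF : IsFacetD n F) : F.card = n + 3 := by
  have hface : ¬ Violation (profileOf F) := (faceD_iff F).mp hF.1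
  have hbump : ∀ i, profileOf F i < 3 →
      Violation (Function.update (profileOf F) i (profileOf F i + 1)) := by
    intro i hi
    -- find j with (i,j) ∉ F
    have hexj : ∃ j : Fin 3, (i, j) ∉ F := by
      by_contra h
      push_neg at h
      have hsub : (Finset.univ.image (fun j : Fin 3 => (i, j))) ⊆
          F.filter (fun p => p.1 = i) := by
        intro p hp
        simp only [Finset.mem_image, Finset.mem_univ, true_and] at hp
        obtain ⟨j, rfl⟩ := hp
        exact Finset.mem_filter.mpr ⟨h j, rfl⟩
      have hcard : (Finset.univ.image (fun j : Fin 3 => (i, j))).card = 3 := by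
        rw [Finset.card_image_of_injective _ (fun a b hab => (Prod.mk.injEq _ _ _ _).mp hab |>.2)]
        simp
      have := Finset.card_le_card hsub
      unfold profileOf at hi
      omega
    obtain ⟨j, hj⟩ := hexj
    have hne : insert (i, j) F ≠ F := fun h => hj (h ▸ Finset.mem_insert_self _ _)
    have hnotface : ¬ IsFaceD n (insert (i, j) F) := by
      intro hf
      exact hne (hF.2 _ hf (Finset.subset_insert _ _))
    rw [faceD_iff] at hnotface
    push_neg at hnotface
    rwa [profile_insert F (i, j) hj] at hnotface
  have := profile_sum_eq hn (profileOf F) (profile_le_three F) hface hbump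
  rw [card_eq_sum_profile]
  exact this

lemma empty_faceD {n : ℕ} : IsFaceD n (∅ : Finset (Fin n × Fin 3)) := by
  rw [faceD_iff]
  intro h
  have hzero : ∀ i, profileOf (∅ : Finset (Fin n × Fin 3)) i = 0 := by
    intro i; simp [profileOf]
  rcases h with ⟨i, j, _, hi, _⟩ | ⟨i, _, _, _, _, _, hi, _, _⟩ |
    ⟨i, _, _, _, _, _, _, _, _, _, hi, _, _, _⟩ <;> rw [hzero i] at hi <;> omega

lemma exists_facetD (n : ℕ) : ∃ F : Finset (Fin n × Fin 3), IsFacetD n F := by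
  classical
  obtain ⟨F, hFmem, hFmax⟩ := Finset.exists_max_image
    (Finset.univ.filter (fun W : Finset (Fin n × Fin 3) => IsFaceD n W)) Finset.card
    ⟨∅, Finset.mem_filter.mpr ⟨Finset.mem_univ _, empty_faceD⟩⟩
  have hFface : IsFaceD n F := (Finset.mem_filter.mp hFmem).2
  refine ⟨F, hFface, fun W hW hsub => ?_⟩
  exact (Finset.eq_of_subset_of_card_le hsub
    (hFmax W (Finset.mem_filter.mpr ⟨Finset.mem_univ _, hW⟩))).symm ▸ rfl

open Sum in
lemma tilde_subset_iff {n : ℕ} (N : Finset (Fin n × Fin 3)) (U : Finset (TGround n)) :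
    tildeNonface N ⊆ U ↔
      ∀ p ∈ N, inl p ∈ U ∧ ∀ k : Fin 4, inr (p.1, p.2, k) ∈ U := by
  constructor
  · intro h p hp
    refine ⟨h ?_, fun k => h ?_⟩
    · exact Finset.mem_union_left _ (Finset.mem_image.mpr ⟨p, hp, rfl⟩)
    · exact Finset.mem_union_right _ (Finset.mem_image.mpr
        ⟨(p, k), Finset.mem_product.mpr ⟨hp, Finset.mem_univ _⟩, rfl⟩)
  · intro h
    apply Finset.union_subset
    · intro x hx
      obtain ⟨p, hp, rfl⟩ := Finset.mem_image.mp hx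
      exact (h p hp).1
    · intro x hx
      obtain ⟨⟨p, k⟩, hpk, rfl⟩ := Finset.mem_image.mp hx
      exact (h p (Finset.mem_product.mp hpk).1).2 k

open Sum in
noncomputable def Fset {n : ℕ} (U : Finset (TGround n)) : Finset (Fin n × Fin 3) :=
  have := Classical.dec
  U.toLeft.filter (fun p => ∀ k : Fin 4, inr (p.1, p.2, k) ∈ U)

open Sum in
lemma mem_Fset {n : ℕ} {U : Finset (TGround n)} {p : Fin n × Fin 3} :
    p ∈ Fset U ↔ inl p ∈ U ∧ ∀ k : Fin 4, inr (p.1, p.2, k) ∈ U := by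
  simp [Fset, Finset.mem_filter, Finset.mem_toLeft]

lemma faceT_iff {n : ℕ} (U : Finset (TGround n)) :
    IsFaceT n U ↔ IsFaceD n (Fset U) := by
  unfold IsFaceT IsFaceD
  constructor
  · intro h ⟨W, hW, hbad⟩
    exact h ⟨W, hbad, (tilde_subset_iff W U).mpr (fun p hp => mem_Fset.mp (hW hp))⟩
  · intro h ⟨N, hbad, hsub⟩
    exact h ⟨N, fun p hp => mem_Fset.mpr ((tilde_subset_iff N U).mp hsub p hp), hbad⟩

open Sum in
lemma facetT_not_face_insert {n : ℕ} {U : Finset (TGround n)} (hU : IsFacetT n U)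
    {g : TGround n} (hg : g ∉ U) : ¬ IsFaceT n (insert g U) := by
  intro hf
  exact hg ((hU.2 _ hf (Finset.subset_insert _ _)) ▸ Finset.mem_insert_self g U)

open Sum in
lemma facetT_Fset_facet {n : ℕ} {U : Finset (TGround n)} (hU : IsFacetT n U) :
    IsFacetD n (Fset U) := by
  have hface : IsFaceD n (Fset U) := (faceT_iff U).mp hU.1
  refine ⟨hface, fun W hW hsub => ?_⟩
  by_contra hne
  obtain ⟨p, hpW, hpF⟩ := Finset.exists_of_ssubset (hsub.ssubset_of_ne (Ne.symm hne))
  have hpface : IsFaceD n (insert p (Fset U)) :=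
    faceD_mono (Finset.insert_subset hpW hsub) hW
  -- show insert p (Fset U) is not a face: two cases
  by_cases hpl : inl p ∈ U
  · -- p ∈ toLeft but not full: some camera var missing
    have hnotfull : ¬ ∀ k : Fin 4, inr (p.1, p.2, k) ∈ U := by
      intro h
      exact hpF (mem_Fset.mpr ⟨hpl, h⟩)
    push_neg at hnotfull
    obtain ⟨k0, hk0⟩ := hnotfull
    have hnf := facetT_not_face_insert hU hk0
    unfold IsFaceT at hnf
    push_neg at hnf
    obtain ⟨N, hbad, hNsub⟩ := hnf
    rw [tilde_subset_iff] at hNsub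
    apply hpface
    refine ⟨N, ?_, hbad⟩
    intro q hq
    obtain ⟨hql, hqr⟩ := hNsub q hq
    rcases eq_or_ne q p with rfl | hqp
    · exact Finset.mem_insert_self _ _
    · apply Finset.mem_insert_of_mem
      apply mem_Fset.mpr
      refine ⟨?_, ?_⟩
      · rcases Finset.mem_insert.mp hql with h | h
        · exact absurd h (by simp)
        · exact h
      · intro k
        rcases Finset.mem_insert.mp (hqr k) with h | h
        · exfalso
          apply hqp
          have h2 := inr.inj h
          rw [Prod.mk.injEq, Prod.mk.injEq] at h2
          exact Prod.ext h2.1 h2.2.1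
        · exact h
  · -- inl p ∉ U : add inl p
    have hnf := facetT_not_face_insert hU hpl
    unfold IsFaceT at hnf
    push_neg at hnf
    obtain ⟨N, hbad, hNsub⟩ := hnf
    rw [tilde_subset_iff] at hNsub
    apply hpface
    refine ⟨N, ?_, hbad⟩
    intro q hq
    obtain ⟨hql, hqr⟩ := hNsub q hq
    rcases eq_or_ne q p with rfl | hqp
    · exact Finset.mem_insert_self _ _
    · apply Finset.mem_insert_of_mem
      apply mem_Fset.mpr
      constructor
      · rcases Finset.mem_insert.mp hql with h | h
        · exact absurd (inl.inj h) hqp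
        · exact h
      · intro k
        rcases Finset.mem_insert.mp (hqr k) with h | h
        · exact absurd h (by simp)
        · exact h

open Sum in
lemma facetT_missing_inl {n : ℕ} {U : Finset (TGround n)} (hU : IsFacetT n U)
    {p : Fin n × Fin 3} {k : Fin 4} (hk : inr (p.1, p.2, k) ∉ U) : inl p ∈ U := by
  by_contra hpl
  apply facetT_not_face_insert hU hpl
  intro ⟨N, hbad, hsub⟩
  rw [tilde_subset_iff] at hsub
  apply (faceT_iff U).mp hU.1
  refine ⟨N, ?_, hbad⟩
  intro q hq
  obtain ⟨hql, hqr⟩ := hsub q hq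
  have hqp : q ≠ p := by
    rintro rfl
    rcases Finset.mem_insert.mp (hqr k) with h | h
    · exact absurd h (by simp)
    · exact hk h
  apply mem_Fset.mpr
  constructor
  · rcases Finset.mem_insert.mp hql with h | h
    · exact absurd (inl.inj h) hqp
    · exact h
  · intro m
    rcases Finset.mem_insert.mp (hqr m) with h | h
    · exact absurd h (by simp)
    · exact h

open Sum in
lemma facetT_missing_unique {n : ℕ} {U : Finset (TGround n)} (hU : IsFacetT n U)
    {p : Fin n × Fin 3} {k k' : Fin 4} (hne : k ≠ k')
    (hk : inr (p.1, p.2, k) ∉ U) (hk' : inr (p.1, p.2, k') ∉ U) : False := by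
  apply facetT_not_face_insert hU hk
  intro ⟨N, hbad, hsub⟩
  rw [tilde_subset_iff] at hsub
  apply (faceT_iff U).mp hU.1
  refine ⟨N, ?_, hbad⟩
  intro q hq
  obtain ⟨hql, hqr⟩ := hsub q hq
  have hqp : q ≠ p := by
    rintro rfl
    rcases Finset.mem_insert.mp (hqr k') with h | h
    · have h2 := inr.inj h
      rw [Prod.mk.injEq, Prod.mk.injEq] at h2
      exact hne h2.2.2.symm
    · exact hk' h
  apply mem_Fset.mpr
  constructor
  · rcases Finset.mem_insert.mp hql with h | h
    · exact absurd h (by simp)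
    · exact h
  · intro m
    rcases Finset.mem_insert.mp (hqr m) with h | h
    · exfalso
      apply hqp
      have h2 := inr.inj h
      rw [Prod.mk.injEq, Prod.mk.injEq] at h2
      exact Prod.ext h2.1 h2.2.1
    · exact h

open Sum in
lemma facetT_card_eq {n : ℕ} {U : Finset (TGround n)} (hU : IsFacetT n U) :
    U.card = (Fset U).card + 12 * n := by
  classical
  have hLR := Finset.card_toLeft_add_card_toRight (u := U)
  -- split toLeft into Fset and B
  have hsplit : ((U.toLeft).filter (fun p => ∀ k : Fin 4, inr (p.1, p.2, k) ∈ U)).card +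
      ((U.toLeft).filter (fun p => ¬ ∀ k : Fin 4, inr (p.1, p.2, k) ∈ U)).card
      = U.toLeft.card := Finset.card_filter_add_card_filter_not _
  set B := (U.toLeft).filter (fun p => ¬ ∀ k : Fin 4, inr (p.1, p.2, k) ∈ U) with hB
  set M := (Finset.univ : Finset (Fin n × Fin 3 × Fin 4)) \ U.toRight with hM
  have hMR : M.card + U.toRight.card = 12 * n := by
    have h1 : U.toRight ⊆ Finset.univ := Finset.subset_univ _
    have h2 := Finset.card_sdiff_add_card_eq_card h1
    rw [← hM] at h2
    have huniv : (Finset.univ : Finset (Fin n × Fin 3 × Fin 4)).card = 12 * n := by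
      simp [Finset.card_univ]
      omega
    omega
  have hMB : M.card = B.card := by
    apply Finset.card_bij (fun a _ => (a.1, a.2.1))
    · intro a ha
      rw [hM, Finset.mem_sdiff, Finset.mem_toRight] at ha
      have hnot : inr ((a.1, a.2.1).1, (a.1, a.2.1).2, a.2.2) ∉ U := by
        simpa using ha.2
      rw [hB, Finset.mem_filter, Finset.mem_toLeft]
      constructor
      · exact facetT_missing_inl hU hnot
      · intro hall
        exact hnot (hall a.2.2)
    · intro a ha b hb hab
      rw [hM, Finset.mem_sdiff, Finset.mem_toRight] at ha hb
      rw [Prod.mk.injEq] at hab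
      have hk : a.2.2 = b.2.2 := by
        by_contra hne
        refine facetT_missing_unique hU (p := (a.1, a.2.1)) hne ?_ ?_
        · simpa using ha.2
        · rw [hab.1, hab.2]
          simpa using hb.2
      obtain ⟨a1, a2, a3⟩ := a
      obtain ⟨b1, b2, b3⟩ := b
      simp_all
    · intro p hp
      rw [hB, Finset.mem_filter, Finset.mem_toLeft] at hp
      obtain ⟨hpl, hnot⟩ := hp
      push_neg at hnot
      obtain ⟨k, hk⟩ := hnot
      refine ⟨(p.1, p.2, k), ?_, rfl⟩
      rw [hM, Finset.mem_sdiff, Finset.mem_toRight]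
      exact ⟨Finset.mem_univ _, hk⟩
  have hFcard : (Fset U).card =
      ((U.toLeft).filter (fun p => ∀ k : Fin 4, inr (p.1, p.2, k) ∈ U)).card := by
    congr 1
    rw [Fset]
    apply Finset.filter_congr_decidable
  omega

open Sum in
lemma exists_facetT (n : ℕ) : ∃ U : Finset (TGround n), IsFacetT n U := by
  classical
  obtain ⟨F, hFface, hFmax⟩ := exists_facetD n
  set U0 : Finset (TGround n) := F.image inl ∪
    (Finset.univ : Finset (Fin n × Fin 3 × Fin 4)).image inr with hU0
  have hinrU0 : ∀ a : Fin n × Fin 3 × Fin 4, inr a ∈ U0 := fun a =>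
    Finset.mem_union_right _ (Finset.mem_image.mpr ⟨a, Finset.mem_univ _, rfl⟩)
  have hinlU0 : ∀ p : Fin n × Fin 3, inl p ∈ U0 ↔ p ∈ F := by
    intro p
    rw [hU0, Finset.mem_union]
    constructor
    · rintro (h | h)
      · obtain ⟨q, hq, hqe⟩ := Finset.mem_image.mp h
        exact (inl.inj hqe) ▸ hq
      · obtain ⟨q, _, hqe⟩ := Finset.mem_image.mp h
        exact absurd hqe (by simp)
    · intro h
      exact Or.inl (Finset.mem_image.mpr ⟨p, h, rfl⟩)
  have hU0face : IsFaceT n U0 := by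
    intro ⟨N, hbad, hsub⟩
    rw [tilde_subset_iff] at hsub
    apply hFface
    exact ⟨N, fun p hp => (hinlU0 p).mp (hsub p hp).1, hbad⟩
  refine ⟨U0, hU0face, fun W hW hsub => ?_⟩
  apply Finset.Subset.antisymm _ hsub
  intro w hw
  rcases w with p | a
  · -- show p ∈ F
    have hface : IsFaceD n (insert p F) := by
      intro ⟨N, hNsub, hbad⟩
      apply hW
      refine ⟨N, hbad, ?_⟩
      rw [tilde_subset_iff]
      intro q hq
      constructor
      · rcases Finset.mem_insert.mp (hNsub hq) with rfl | h
        · exact hw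
        · exact hsub ((hinlU0 q).mpr h)
      · intro k
        exact hsub (hinrU0 _)
    have heq := hFmax _ hface (Finset.subset_insert _ _)
    rw [hinlU0]
    exact heq ▸ Finset.mem_insert_self p F
  · exact hinrU0 a

/-- `Δ̃ₙ` (`n ≥ 4`) is pure of dimension `13n + 2`: every facet has exactly
`13n + 3` elements. -/
theorem tilde_Delta_n_pure (n : ℕ) (hn : 4 ≤ n) :
    (∀ U : Finset (TGround n), IsFacetT n U → U.card = 13 * n + 3) ∧
    ∃ U : Finset (TGround n), IsFacetT n U := by
  constructor
  · intro U hU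
    have h1 := facetT_card_eq hU
    have h2 := facetD_card hn _ (facetT_Fset_facet hU)
    omega
  · exact exists_facetT n
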